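/- Let σ_w² > 0, 0 ≤ P_min < P_max, p_j ∈ [0,1], and P_a > 0 be reals with max(P_min, P_L) < P_a < P_max, where P_L = P_max − P_min, and let μ = (1−p_j)·δ_{σ_w²} + p_j·Unif[σ_w² + P_min, σ_w² + P_max]. Then the supremum over γ ∈ ℝ of μ([γ − P_a, γ)) equals max(1 − p_j·(P_max − P_a)/P_L, p_j); equivalently, the warden's minimum total detection error probability ξ* equals min(p_j·(P_max − P_a)/P_L, 1 − p_j). -/

import Mathlib

open MeasureTheory Set

private lemma vol_Ico_inter_Icc (a b c d : ℝ) :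
    volume (Ico a b ∩ Icc c d) = ENNReal.ofReal (min b d - max a c) := by
  apply le_antisymm
  · calc volume (Ico a b ∩ Icc c d) ≤ volume (Icc (max a c) (min b d)) := by
          apply measure_mono
          rintro x ⟨⟨h1, h2⟩, h3, h4⟩
          exact ⟨max_le h1 h3, le_min h2.le h4⟩
    _ = ENNReal.ofReal (min b d - max a c) := Real.volume_Icc
  · rw [← Real.volume_Ioo (a := max a c) (b := min b d)]
    apply measure_mono
    rintro x ⟨h1, h2⟩
    exact ⟨⟨(le_max_left a c).trans h1.le, h2.trans_le (min_le_left b d)⟩,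
      (le_max_right a c).trans h1.le, (h2.trans_le (min_le_right b d)).le⟩

theorem xi_star_case_max_Pmin_PL_lt_Pa_lt_Pmax
    (σw Pmin Pmax pj Pa : ℝ)
    (hσw : 0 < σw) (hPmin : 0 ≤ Pmin) (hlt : Pmin < Pmax)
    (hpj0 : 0 ≤ pj) (hpj1 : pj ≤ 1) (hPa : 0 < Pa)
    (hcase1 : max Pmin (Pmax - Pmin) < Pa) (hcase2 : Pa < Pmax)
    (μ : Measure ℝ)
    (hμ : μ = ENNReal.ofReal (1 - pj) • Measure.dirac σw
        + ENNReal.ofReal pj •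
          ((ENNReal.ofReal (Pmax - Pmin))⁻¹ •
            volume.restrict (Icc (σw + Pmin) (σw + Pmax)))) :
    (⨆ γ : ℝ, μ (Ico (γ - Pa) γ))
      = ENNReal.ofReal (max (1 - pj * (Pmax - Pa) / (Pmax - Pmin)) pj) ∧
    (1 - ⨆ γ : ℝ, μ (Ico (γ - Pa) γ))
      = ENNReal.ofReal (min (pj * (Pmax - Pa) / (Pmax - Pmin)) (1 - pj)) := by
  have hPL : (0 : ℝ) < Pmax - Pmin := sub_pos.mpr hlt
  set PL := Pmax - Pmin with hPLdef
  have hPaPmin : Pmin < Pa := lt_of_le_of_lt (le_max_left _ _) hcase1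
  have hPaPL : PL < Pa := lt_of_le_of_lt (le_max_right _ _) hcase1
  set g : ℝ → ℝ := fun γ =>
    (if γ - Pa ≤ σw ∧ σw < γ then 1 - pj else 0)
      + pj * (max (min γ (σw + Pmax) - max (γ - Pa) (σw + Pmin)) 0 / PL) with hg
  -- pointwise value of the measure
  have hμg : ∀ γ : ℝ, μ (Ico (γ - Pa) γ) = ENNReal.ofReal (g γ) := by
    intro γ
    rw [hμ]
    simp only [Measure.add_apply, Measure.smul_apply, smul_eq_mul,
      Measure.restrict_apply measurableSet_Ico,
      Measure.dirac_apply' _ measurableSet_Ico]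
    rw [vol_Ico_inter_Icc]
    have hof : ENNReal.ofReal (min γ (σw + Pmax) - max (γ - Pa) (σw + Pmin))
        = ENNReal.ofReal (max (min γ (σw + Pmax) - max (γ - Pa) (σw + Pmin)) 0) := by
      rcases le_total (min γ (σw + Pmax) - max (γ - Pa) (σw + Pmin)) 0 with h | h
      · rw [ENNReal.ofReal_of_nonpos h, max_eq_right h, ENNReal.ofReal_zero]
      · rw [max_eq_left h]
    rw [hof, ← ENNReal.ofReal_inv_of_pos hPL,
      ← ENNReal.ofReal_mul (by positivity),
      ← ENNReal.ofReal_mul hpj0]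
    by_cases hmem : γ - Pa ≤ σw ∧ σw < γ
    · rw [Set.indicator_of_mem (mem_Ico.mpr hmem), Pi.one_apply, mul_one,
        ← ENNReal.ofReal_add (by linarith)
          (by positivity)]
      simp only [hg]
      rw [if_pos hmem]
      congr 1
      ring
    · rw [Set.indicator_of_notMem (fun h => hmem (mem_Ico.mp h)), mul_zero, zero_add]
      simp only [hg]
      rw [if_neg hmem, zero_add]
      congr 1
      ring
  -- uniform bound
  have key : ∀ γ : ℝ, g γ ≤ max (1 - pj * (Pmax - Pa) / PL) pj := by
    intro γ
    by_cases hmem : γ - Pa ≤ σw ∧ σw < γ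
    · refine le_trans ?_ (le_max_left _ _)
      simp only [hg]
      rw [if_pos hmem]
      have hL : max (min γ (σw + Pmax) - max (γ - Pa) (σw + Pmin)) 0 ≤ Pa - Pmin := by
        apply max_le _ (by linarith)
        have h1 := min_le_left γ (σw + Pmax)
        have h2 := le_max_right (γ - Pa) (σw + Pmin)
        have hγ : γ ≤ σw + Pa := by linarith [hmem.1]
        linarith
      have hmul : pj * (max (min γ (σw + Pmax) - max (γ - Pa) (σw + Pmin)) 0 / PL)
          ≤ pj * ((Pa - Pmin) / PL) :=
        mul_le_mul_of_nonneg_left (div_le_div_of_nonneg_right hL hPL.le) hpj0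
      have heq : (1 - pj) + pj * ((Pa - Pmin) / PL) = 1 - pj * (Pmax - Pa) / PL := by
        rw [hPLdef]
        field_simp [sub_ne_zero.mpr hlt.ne']
        ring
      linarith
    · refine le_trans ?_ (le_max_right _ _)
      simp only [hg]
      rw [if_neg hmem, zero_add]
      have hL : max (min γ (σw + Pmax) - max (γ - Pa) (σw + Pmin)) 0 ≤ PL := by
        apply max_le _ hPL.le
        have h1 := min_le_right γ (σw + Pmax)
        have h2 := le_max_right (γ - Pa) (σw + Pmin)
        rw [hPLdef]
        linarith
      exact mul_le_of_le_one_right hpj0 ((div_le_one hPL).mpr hL)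
  -- witness values
  have hgA : g (σw + Pa) = 1 - pj * (Pmax - Pa) / PL := by
    simp only [hg]
    rw [if_pos ⟨by linarith, by linarith⟩,
      min_eq_left (by linarith),
      show σw + Pa - Pa = σw from by ring,
      max_eq_right (a := σw) (b := σw + Pmin) (by linarith),
      show σw + Pa - (σw + Pmin) = Pa - Pmin from by ring,
      max_eq_left (a := Pa - Pmin) (b := 0) (by linarith)]
    rw [hPLdef]
    field_simp [sub_ne_zero.mpr hlt.ne']
    ring
  have hgB : g (σw + Pmax) = pj := by
    simp only [hg]
    rw [if_neg (fun h => by linarith [h.1]), min_self,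
      max_eq_right (show σw + Pmax - Pa ≤ σw + Pmin from by linarith),
      show σw + Pmax - (σw + Pmin) = PL from by rw [hPLdef]; ring,
      max_eq_left hPL.le, div_self hPL.ne', mul_one, zero_add]
  -- the supremum
  have hsup : (⨆ γ : ℝ, μ (Ico (γ - Pa) γ))
      = ENNReal.ofReal (max (1 - pj * (Pmax - Pa) / PL) pj) := by
    apply le_antisymm
    · exact iSup_le fun γ => by
        rw [hμg]; exact ENNReal.ofReal_le_ofReal (key γ)
    · rcases le_total (1 - pj * (Pmax - Pa) / PL) pj with h | h
      · rw [max_eq_right h]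
        refine le_trans ?_ (le_iSup _ (σw + Pmax))
        rw [hμg, hgB]
      · rw [max_eq_left h]
        refine le_trans ?_ (le_iSup _ (σw + Pa))
        rw [hμg, hgA]
  refine ⟨hsup, ?_⟩
  rw [hsup]
  have hmaxnn : (0 : ℝ) ≤ max (1 - pj * (Pmax - Pa) / PL) pj :=
    le_trans hpj0 (le_max_right _ _)
  have hid : min (pj * (Pmax - Pa) / PL) (1 - pj)
      = 1 - max (1 - pj * (Pmax - Pa) / PL) pj := by
    rcases le_total (pj * (Pmax - Pa) / PL) (1 - pj) with h | h
    · rw [min_eq_left h, max_eq_left (by linarith)]; ring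
    · rw [min_eq_right h, max_eq_right (by linarith)]
  rw [hid, ENNReal.ofReal_sub 1 hmaxnn]
  norm_num
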